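/- Let F be a field and V a linear subspace of F^m of dimension d ≥ 2. Then V has a basis consisting of defective vectors, i.e., vectors having at least one zero coordinate. -/

import Mathlib

/-- Let `F` be a field and `V ⊆ F^m` a subspace of dimension
`d ≥ 2`. Then `V` has a basis consisting of defective vectors, i.e. vectors having at
least one zero coordinate. -/
theorem exists_basis_of_defective_vectors (F : Type) [Field F] (m : ℕ)
    (V : Submodule F (Fin m → F)) (d : ℕ)
    (hd : Module.finrank F V = d) (h2 : 2 ≤ d) :
    ∃ b : Module.Basis (Fin d) F V, ∀ i : Fin d, ∃ k : Fin m, (b i : Fin m → F) k = 0 := by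
  classical
  set φ : Fin m → Module.Dual F V := fun k => (LinearMap.proj k).comp V.subtype with hφ
  have hspan : Submodule.span F (Set.range φ) = ⊤ := by
    have hco : (Submodule.span F (Set.range φ)).dualCoannihilator = ⊥ := by
      rw [Submodule.eq_bot_iff]
      intro v hv
      rw [Submodule.mem_dualCoannihilator] at hv
      have : ∀ k, (v : Fin m → F) k = 0 := fun k =>
        hv (φ k) (Submodule.subset_span ⟨k, rfl⟩)
      exact Subtype.ext (funext this)
    have h1 := Subspace.finrank_add_finrank_dualCoannihilator_eq
      (Submodule.span F (Set.range φ))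
    rw [hco, finrank_bot, add_zero] at h1
    exact Submodule.eq_top_of_finrank_eq (by rw [h1, Subspace.dual_finrank_eq])
  obtain ⟨t, hts, htspan, htli⟩ := exists_linearIndependent F (Set.range φ)
  rw [hspan] at htspan
  have htfin : t.Finite := htli.setFinite
  haveI : Fintype t := htfin.fintype
  have hB : Module.finrank F (Module.Dual F V) = Fintype.card t := by
    have B : Module.Basis t F (Module.Dual F V) :=
      Module.Basis.mk htli (by rw [Subtype.range_coe, htspan])
    exact Module.finrank_eq_card_basis B
  have hcard : Fintype.card t = d := by
    rw [← hB, Subspace.dual_finrank_eq, hd]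
  have g : Fin d ≃ t := (Fintype.equivFinOfCardEq hcard).symm
  have hsel : ∀ i : Fin d, ∃ k : Fin m, φ k = (g i : Module.Dual F V) :=
    fun i => hts (g i).2
  choose s hs using hsel
  set ψ : V →ₗ[F] (Fin d → F) := LinearMap.pi (fun i => φ (s i)) with hψ
  have hinj : Function.Injective ψ := by
    rw [← LinearMap.ker_eq_bot, Submodule.eq_bot_iff]
    intro v hv
    rw [LinearMap.mem_ker] at hv
    have hvt : ∀ f ∈ t, f v = 0 := by
      intro f hf
      have : f = φ (s (g.symm ⟨f, hf⟩)) := by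
        rw [hs]; simp
      rw [this]
      have := congrFun hv (g.symm ⟨f, hf⟩)
      simpa [hψ] using this
    have hall : ∀ f : Module.Dual F V, f v = 0 := by
      intro f
      have hf : f ∈ Submodule.span F t := by rw [htspan]; trivial
      induction hf using Submodule.span_induction with
      | mem f hf => exact hvt f hf
      | zero => simp
      | add f g _ _ hf hg => simp [hf, hg]
      | smul c f _ hf => simp [hf]
    exact (Module.forall_dual_apply_eq_zero_iff F v).mp hall
  haveI : FiniteDimensional F V := inferInstance
  have hrk : Module.finrank F V = Module.finrank F (Fin d → F) := by
    simp [hd]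
  let e : V ≃ₗ[F] (Fin d → F) := LinearMap.linearEquivOfInjective ψ hinj hrk
  refine ⟨(Pi.basisFun F (Fin d)).map e.symm, ?_⟩
  intro i
  haveI : Nontrivial (Fin d) := Fin.nontrivial_iff_two_le.mpr h2
  obtain ⟨j, hj⟩ := exists_ne i
  refine ⟨s j, ?_⟩
  have h1 : e ((Pi.basisFun F (Fin d)).map e.symm i) = Pi.basisFun F (Fin d) i := by
    simp
  have h2' : ψ ((Pi.basisFun F (Fin d)).map e.symm i) j = 0 := by
    have hh : (ψ ((Pi.basisFun F (Fin d)).map e.symm i)) = Pi.basisFun F (Fin d) i := by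
      rw [← h1]; rfl
    rw [hh]
    simp [Pi.basisFun_apply, hj]
  have h3 : ψ ((Pi.basisFun F (Fin d)).map e.symm i) j
      = ((((Pi.basisFun F (Fin d)).map e.symm i) : V) : Fin m → F) (s j) := rfl
  rw [h3] at h2'
  exact h2'
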